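/- Let n ≥ 2, let Σ be a real n×2 matrix of rank 2, and let η ∈ ℝ². Then there exist indices i ≠ j in {1,…,n} and real numbers a, b such that a·(row i of Σ) + b·(row j of Σ) = ηᵀ and |a| + |b| equals the minimum of ‖π‖₁ over all π ∈ ℝⁿ with Σᵀπ = η. (Equal-minimum part of Proposition 1: restricting to a suitable two-derivative submarket achieves the same minimal ℓ1 norm as the full n-derivative market, so the problem with n = 2 and the problem with any n ≥ 2 have the same minimal ℓ1 norm of allocation.) -/

import Mathlib

open Matrix Finset

noncomputable def l1 {n : ℕ} (π : Fin n → ℝ) : ℝ := ∑ l, |π l|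

lemma l1_cont {n : ℕ} : Continuous (l1 (n := n)) := by
  unfold l1
  exact continuous_finset_sum _ fun l _ => (continuous_apply l).abs

lemma exists_min {n : ℕ} (S : Set (Fin n → ℝ)) (hS : S.Nonempty) (hcl : IsClosed S) :
    ∃ π ∈ S, ∀ ρ ∈ S, l1 π ≤ l1 ρ := by
  obtain ⟨π₀, hπ₀⟩ := hS
  set K : Set (Fin n → ℝ) := S ∩ l1 ⁻¹' Set.Iic (l1 π₀) with hK
  have hKcl : IsClosed K := hcl.inter (isClosed_Iic.preimage l1_cont)
  have hsub : K ⊆ Set.pi Set.univ (fun _ : Fin n => Set.Icc (-(l1 π₀)) (l1 π₀)) := by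
    rintro π ⟨-, hπ⟩ i -
    have h1 : |π i| ≤ l1 π := Finset.single_le_sum (f := fun l => |π l|)
      (fun l _ => abs_nonneg _) (mem_univ i)
    have := le_trans h1 hπ
    constructor <;> [linarith [neg_abs_le (π i)]; linarith [le_abs_self (π i)]]
  have hKcomp : IsCompact K := IsCompact.of_isClosed_subset
    (isCompact_univ_pi fun _ => isCompact_Icc) hKcl hsub
  have hKne : K.Nonempty := ⟨π₀, hπ₀, Set.mem_preimage.mpr (Set.mem_Iic.mpr le_rfl)⟩
  obtain ⟨π, hπK, hmin⟩ := hKcomp.exists_isMinOn hKne l1_cont.continuousOn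
  refine ⟨π, hπK.1, fun ρ hρ => ?_⟩
  by_cases h : l1 ρ ≤ l1 π₀
  · exact hmin ⟨hρ, h⟩
  · have h1 : l1 π ≤ l1 π₀ := hπK.2
    linarith [le_of_not_ge h]

lemma feas_ne {n : ℕ} (A : Matrix (Fin n) (Fin 2) ℝ) (hrank : A.rank = 2) (η : Fin 2 → ℝ) :
    ∃ π : Fin n → ℝ, Aᵀ *ᵥ π = η := by
  have h1 : Aᵀ.rank = 2 := by rw [Matrix.rank_transpose]; exact hrank
  have h2 : LinearMap.range Aᵀ.mulVecLin = ⊤ := by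
    apply Submodule.eq_top_of_finrank_eq
    rw [← Matrix.rank, h1]
    simp [Module.finrank_pi]
  have h3 : Function.Surjective Aᵀ.mulVecLin := LinearMap.range_eq_top.mp h2
  obtain ⟨π, hπ⟩ := h3 η
  exact ⟨π, by rw [← Matrix.mulVecLin_apply]; exact hπ⟩

lemma dep {n : ℕ} (A : Matrix (Fin n) (Fin 2) ℝ) (s : Finset (Fin n)) (hs : 3 ≤ s.card) :
    ∃ c : Fin n → ℝ, c ≠ 0 ∧ (∀ l, l ∉ s → c l = 0) ∧ Aᵀ *ᵥ c = 0 := by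
  have hni : ¬ LinearIndependent ℝ (fun i : ↥s => A i) := by
    intro h
    have := h.fintype_card_le_finrank
    simp [Module.finrank_pi] at this
    omega
  obtain ⟨g, hg0, i0, hi0⟩ := Fintype.not_linearIndependent_iff.mp hni
  refine ⟨fun l => if h : l ∈ s then g ⟨l, h⟩ else 0, ?_, ?_, ?_⟩
  · intro h
    apply hi0
    have := congrFun h i0
    simpa [i0.2] using this
  · intro l hl; simp [hl]
  · funext k
    have := congrFun hg0 k
    simp only [Matrix.mulVec, dotProduct, Matrix.transpose_apply, Pi.zero_apply]
    rw [← Finset.sum_subset (Finset.subset_univ s) (by intro l _ hl; simp [hl])]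
    rw [← Finset.sum_attach s (fun l => A l k * (if h : l ∈ s then g ⟨l, h⟩ else 0))]
    simp only [Finset.sum_apply, Pi.smul_apply, smul_eq_mul, Pi.zero_apply] at this
    rw [← this]
    apply Finset.sum_congr rfl
    intro l _
    simp [l.2, mul_comm]

lemma reduce_step {n : ℕ} (A : Matrix (Fin n) (Fin 2) ℝ) (η : Fin 2 → ℝ)
    (π : Fin n → ℝ) (hfeas : Aᵀ *ᵥ π = η)
    (hmin : ∀ ρ, Aᵀ *ᵥ ρ = η → l1 π ≤ l1 ρ)
    (hcard : 3 ≤ (univ.filter (fun l => π l ≠ 0)).card) :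
    ∃ π', Aᵀ *ᵥ π' = η ∧ l1 π' = l1 π ∧
      (univ.filter (fun l => π' l ≠ 0)).card < (univ.filter (fun l => π l ≠ 0)).card := by
  set s := univ.filter (fun l => π l ≠ 0) with hsdef
  obtain ⟨c, hc0, hcs, hcA⟩ := dep A s hcard
  have hcπ : ∀ l, c l ≠ 0 → π l ≠ 0 := by
    intro l hl
    by_contra h
    exact hl (hcs l (by simp [hsdef, h]))
  set u := univ.filter (fun l => c l ≠ 0) with hudef
  have hune : u.Nonempty := by
    rw [Finset.filter_nonempty_iff]
    by_contra h
    push_neg at h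
    exact hc0 (funext fun l => by simpa using h l (mem_univ l))
  obtain ⟨l₀, hl₀u, hl₀min⟩ := Finset.exists_min_image u (fun l => |π l / c l|) hune
  have hcl₀ : c l₀ ≠ 0 := by simpa [hudef] using hl₀u
  have hπl₀ : π l₀ ≠ 0 := hcπ l₀ hcl₀
  set t : ℝ := -π l₀ / c l₀ with htdef
  have ht0 : t ≠ 0 := by
    simp [htdef, div_eq_zero_iff, hπl₀, hcl₀]
  have habs : ∀ l, c l ≠ 0 → |t| * |c l| ≤ |π l| := by
    intro l hl
    have h1 : |π l₀ / c l₀| ≤ |π l / c l| := hl₀min l (by simp [hudef, hl])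
    have h2 : |t| = |π l₀| / |c l₀| := by rw [htdef, abs_div, abs_neg]
    rw [abs_div, abs_div, div_le_div_iff₀ (abs_pos.mpr hcl₀) (abs_pos.mpr hl)] at h1
    rw [h2, div_mul_eq_mul_div, div_le_iff₀ (abs_pos.mpr hcl₀)]
    exact h1
  set e : Fin n → ℝ := fun l => if 0 ≤ π l then c l else -c l with hedef
  set D : ℝ := ∑ l, e l with hDdef
  have hlin : ∀ r : ℝ, |r| ≤ |t| → l1 (π + r • c) = l1 π + r * D := by
    intro r hr
    have hterm : ∀ l, |π l + r * c l| = |π l| + r * e l := by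
      intro l
      by_cases hcl : c l = 0
      · simp [hedef, hcl]
      · have hb : |r * c l| ≤ |π l| := by
          rw [abs_mul]
          calc |r| * |c l| ≤ |t| * |c l| := by
                exact mul_le_mul_of_nonneg_right hr (abs_nonneg _)
            _ ≤ |π l| := habs l hcl
        have hπl := hcπ l hcl
        rcases lt_or_gt_of_ne hπl with hneg | hpos
        · have h1 : π l + r * c l ≤ 0 := by
            have := le_abs_self (r * c l)
            have := abs_of_neg hneg
            linarith [hb]
          have he : e l = -c l := by simp [hedef, not_le.mpr hneg]
          rw [abs_of_nonpos h1, abs_of_neg hneg, he]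
          ring
        · have h1 : 0 ≤ π l + r * c l := by
            have := neg_abs_le (r * c l)
            have := abs_of_pos hpos
            linarith [hb]
          have he : e l = c l := by simp [hedef, hpos.le]
          rw [abs_of_nonneg h1, abs_of_pos hpos, he]
    simp only [l1, Pi.add_apply, Pi.smul_apply, smul_eq_mul]
    rw [Finset.sum_congr rfl (fun l _ => hterm l), Finset.sum_add_distrib, ← Finset.mul_sum]
  have hfeas' : ∀ r : ℝ, Aᵀ *ᵥ (π + r • c) = η := by
    intro r
    rw [Matrix.mulVec_add, Matrix.mulVec_smul, hfeas, hcA]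
    simp
  have hD : D = 0 := by
    have h1 := hmin _ (hfeas' t)
    have h2 := hmin _ (hfeas' (-t))
    rw [hlin t le_rfl] at h1
    rw [hlin (-t) (by rw [abs_neg])] at h2
    have h3 : t * D = 0 := le_antisymm (by linarith) (by linarith)
    exact (mul_eq_zero.mp h3).resolve_left ht0
  refine ⟨π + t • c, hfeas' t, by rw [hlin t le_rfl, hD]; ring, ?_⟩
  have hl₀s : l₀ ∈ s := by
    simp [hsdef, hπl₀]
  have hsub : univ.filter (fun l => (π + t • c) l ≠ 0) ⊆ s.erase l₀ := by
    intro l hl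
    simp only [mem_filter, mem_univ, true_and, Pi.add_apply, Pi.smul_apply, smul_eq_mul] at hl
    rw [Finset.mem_erase]
    constructor
    · rintro rfl
      apply hl
      rw [htdef]
      field_simp
      ring
    · by_contra h
      apply hl
      have h1 : π l = 0 := by
        by_contra h2
        exact h (by simp [hsdef, h2])
      have h2 : c l = 0 := hcs l (by simp [hsdef, h1])
      simp [h1, h2]
  calc (univ.filter (fun l => (π + t • c) l ≠ 0)).card ≤ (s.erase l₀).card :=
        Finset.card_le_card hsub
    _ < s.card := by
        rw [Finset.card_erase_of_mem hl₀s]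
        omega

lemma reduce_all {n : ℕ} (A : Matrix (Fin n) (Fin 2) ℝ) (η : Fin 2 → ℝ) :
    ∀ m : ℕ, ∀ π : Fin n → ℝ, Aᵀ *ᵥ π = η →
      (∀ ρ, Aᵀ *ᵥ ρ = η → l1 π ≤ l1 ρ) →
      (univ.filter (fun l => π l ≠ 0)).card ≤ m →
      ∃ π', Aᵀ *ᵥ π' = η ∧ l1 π' = l1 π ∧ (univ.filter (fun l => π' l ≠ 0)).card ≤ 2 := by
  intro m
  induction m with
  | zero => intro π h1 h2 h3; exact ⟨π, h1, rfl, by omega⟩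
  | succ m ih =>
    intro π h1 h2 h3
    by_cases hc : (univ.filter (fun l => π l ≠ 0)).card ≤ 2
    · exact ⟨π, h1, rfl, hc⟩
    · have h4 : 3 ≤ (univ.filter (fun l => π l ≠ 0)).card := by omega
      obtain ⟨π'', hf, hl, hlt⟩ := reduce_step A η π h1 h2 h4
      have hmin'' : ∀ ρ, Aᵀ *ᵥ ρ = η → l1 π'' ≤ l1 ρ := fun ρ hρ => hl ▸ h2 ρ hρ
      obtain ⟨π', hf', hl', hc'⟩ := ih π'' hf hmin'' (by omega)
      exact ⟨π', hf', hl'.trans hl, hc'⟩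

/-- Equal-minimum part of Proposition 1: a suitable two-derivative submarket achieves
the same minimal ℓ1 norm as the full n-derivative market. -/
theorem two_asset_same_min (n : ℕ) (hn : 2 ≤ n) (A : Matrix (Fin n) (Fin 2) ℝ)
    (hrank : A.rank = 2) (η : Fin 2 → ℝ) :
    ∃ i j : Fin n, i ≠ j ∧ ∃ a b : ℝ,
      (∀ k : Fin 2, a * A i k + b * A j k = η k) ∧
      IsLeast ((fun π : Fin n → ℝ => ∑ l, |π l|) '' {π | Aᵀ *ᵥ π = η}) (|a| + |b|) := by
  have hSne : ({π : Fin n → ℝ | Aᵀ *ᵥ π = η}).Nonempty := feas_ne A hrank η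
  have hScl : IsClosed ({π : Fin n → ℝ | Aᵀ *ᵥ π = η}) := by
    have hcont : Continuous (fun π : Fin n → ℝ => Aᵀ *ᵥ π) := by
      have := (Aᵀ.mulVecLin).continuous_of_finiteDimensional
      exact this
    have : ({π : Fin n → ℝ | Aᵀ *ᵥ π = η}) = (fun π : Fin n → ℝ => Aᵀ *ᵥ π) ⁻¹' {η} := by
      ext π; simp
    rw [this]
    exact isClosed_singleton.preimage hcont
  obtain ⟨πm, hπmS, hπmmin⟩ := exists_min _ hSne hScl
  obtain ⟨π', hf', hl', hc'⟩ := reduce_all A η _ πm hπmS (fun ρ hρ => hπmmin ρ hρ) le_rfl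
  have hπ'min : ∀ ρ, Aᵀ *ᵥ ρ = η → l1 π' ≤ l1 ρ := fun ρ hρ => hl' ▸ hπmmin ρ hρ
  set s := univ.filter (fun l => π' l ≠ 0) with hsdef
  obtain ⟨tset, hst, -, htcard⟩ := Finset.exists_subsuperset_card_eq (Finset.subset_univ s)
    hc' (by simpa using hn)
  obtain ⟨i, j, hij, rfl⟩ := Finset.card_eq_two.mp htcard
  have hzero : ∀ l, l ∉ ({i, j} : Finset (Fin n)) → π' l = 0 := by
    intro l hl
    by_contra h
    exact hl (hst (by simp [hsdef, h]))
  refine ⟨i, j, hij, π' i, π' j, ?_, ?_⟩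
  · intro k
    have h1 := congrFun hf' k
    simp only [Matrix.mulVec, dotProduct, Matrix.transpose_apply] at h1
    rw [← Finset.sum_subset (Finset.subset_univ ({i, j} : Finset (Fin n)))
      (by intro l _ hl; rw [hzero l hl]; ring)] at h1
    rw [Finset.sum_pair hij] at h1
    linarith [h1]
  · constructor
    · refine ⟨π', hf', ?_⟩
      show ∑ l, |π' l| = |π' i| + |π' j|
      rw [← Finset.sum_subset (Finset.subset_univ ({i, j} : Finset (Fin n)))
        (by intro l _ hl; rw [hzero l hl]; simp)]
      rw [Finset.sum_pair hij]
    · rintro x ⟨ρ, hρ, rfl⟩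
      have h2 : |π' i| + |π' j| = l1 π' := by
        rw [l1, ← Finset.sum_subset (Finset.subset_univ ({i, j} : Finset (Fin n)))
          (by intro l _ hl; rw [hzero l hl]; simp)]
        rw [Finset.sum_pair hij]
      rw [h2]
      exact hπ'min ρ hρ
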